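/- Let k ≥ 2 be an integer and let H = (V, E_2 ∪ … ∪ E_k) be a hypergraph with N vertices, where E_i is the set of edges of size i, and average degrees t_i^{i−1} := i·|E_i|/N for i = 2, …, k. Let T := max{t_i : 2 ≤ i ≤ k} and suppose T ≥ 1/2. Then α(H) ≥ (1/4)·(N/T). -/

import Mathlib

open Finset


/-- The independence number of a hypergraph with edge set `E`. -/
noncomputable def indepNum {V : Type*} [DecidableEq V] (E : Finset (Finset V)) : ℕ :=
  sSup {m | ∃ I : Finset V, (∀ e ∈ E, ¬ e ⊆ I) ∧ I.card = m}

lemma le_indepNum {V : Type*} [DecidableEq V] [Fintype V] (E : Finset (Finset V))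
    (I : Finset V) (hI : ∀ e ∈ E, ¬ e ⊆ I) : I.card ≤ indepNum E :=
  le_csSup ⟨Fintype.card V, fun m hm => by obtain ⟨J, _, hJ⟩ := hm; exact hJ ▸ J.card_le_univ⟩
    ⟨I, hI, rfl⟩

lemma desc_core {s N : ℕ} (h : s ≤ N) (i : ℕ) :
    s.descFactorial i * N ^ i ≤ N.descFactorial i * s ^ i := by
  rw [Nat.descFactorial_eq_prod_range, Nat.descFactorial_eq_prod_range]
  have hN : N ^ i = ∏ _j ∈ range i, N := by simp
  have hs : s ^ i = ∏ _j ∈ range i, s := by simp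
  rw [hN, hs, ← Finset.prod_mul_distrib, ← Finset.prod_mul_distrib]
  apply Finset.prod_le_prod'
  intro j _
  rcases le_or_gt s j with hj | hj
  · simp [Nat.sub_eq_zero_of_le hj]
  · calc (s - j) * N = s * N - j * N := Nat.sub_mul _ _ _
      _ ≤ N * s - j * s := by
          rw [Nat.mul_comm s N]
          exact Nat.sub_le_sub_left (Nat.mul_le_mul_left j h) _
      _ = (N - j) * s := (Nat.sub_mul _ _ _).symm

lemma choose_ratio {N s i : ℕ} (hsN : s ≤ N) (his : i ≤ s) :
    (N - i).choose (s - i) * N ^ i ≤ N.choose s * s ^ i := by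
  apply Nat.le_of_mul_le_mul_left _ (Nat.factorial_pos s)
  calc Nat.factorial s * ((N - i).choose (s - i) * N ^ i)
      = (N - i).descFactorial (s - i) * (s.descFactorial i * N ^ i) := by
        rw [← Nat.factorial_mul_descFactorial his,
          Nat.descFactorial_eq_factorial_mul_choose (N - i) (s - i)]
        ring
    _ ≤ (N - i).descFactorial (s - i) * (N.descFactorial i * s ^ i) :=
        Nat.mul_le_mul_left _ (desc_core hsN i)
    _ = Nat.factorial s * (N.choose s * s ^ i) := by
        rw [show (N - i).descFactorial (s - i) * (N.descFactorial i * s ^ i)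
            = ((N - i).descFactorial (s - i) * N.descFactorial i) * s ^ i by ring,
          Nat.descFactorial_mul_descFactorial his,
          Nat.descFactorial_eq_factorial_mul_choose N s]
        ring

lemma count_supersets {N s : ℕ} (e : Finset (Fin N)) :
    ((powersetCard s (univ : Finset (Fin N))).filter (fun S => e ⊆ S)).card
      ≤ (N - e.card).choose (s - e.card) := by
  have hkey : (((univ : Finset (Fin N)) \ e).powersetCard (s - e.card)).card
      = (N - e.card).choose (s - e.card) := by
    rw [card_powersetCard, card_sdiff_of_subset (subset_univ e), card_univ, Fintype.card_fin]
  rw [← hkey]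
  apply Finset.card_le_card_of_injOn (fun S => S \ e)
  · intro S hS
    simp only [mem_coe, mem_filter, mem_powersetCard] at hS
    obtain ⟨⟨_, hcard⟩, hsub⟩ := hS
    rw [mem_coe, mem_powersetCard]
    exact ⟨sdiff_subset_sdiff (subset_univ S) le_rfl, by rw [card_sdiff_of_subset hsub, hcard]⟩
  · intro S1 h1 S2 h2 h
    simp only [coe_filter, Set.mem_setOf_eq, mem_powersetCard] at h1 h2
    have e1 : S1 \ e ∪ e = S1 := sdiff_union_of_subset h1.2
    have e2 : S2 \ e ∪ e = S2 := sdiff_union_of_subset h2.2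
    simp only [] at h
    rw [← e1, ← e2, h]

lemma geom_bound {x : ℝ} (hx0 : 0 ≤ x) (hx : x ≤ 1/2) :
    ∀ k, 2 ≤ k → ∑ i ∈ Icc 3 k, x ^ (i-1) ≤ 2*x^2 - 2*x^k := by
  intro k hk
  induction k, hk using Nat.le_induction with
  | base => norm_num
  | succ n hn ih =>
    rw [Finset.sum_Icc_succ_top (by omega : 3 ≤ n + 1)]
    have h1 : x ^ (n+1-1) = x ^ n := by congr 1
    have h2 : x ^ (n+1) = x * x ^ n := by ring
    have h3 : (0:ℝ) ≤ x ^ n := pow_nonneg hx0 n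
    rw [h1, h2]
    nlinarith

lemma arith_final (u s x : ℝ) (hu : 4 ≤ u) (hs1 : u - 1 ≤ s) (hs2 : s ≤ u)
    (hx : x * (2*u) = s) :
    u/2 ≤ s - (s*x/2 + 2*s*x^2/3) := by
  have hu0 : (0:ℝ) < u := by linarith
  have hx38 : 3/8 ≤ x := by nlinarith
  have hx12 : x ≤ 1/2 := by nlinarith
  nlinarith [mul_nonneg (mul_nonneg (sub_nonneg.2 hx38) (sub_nonneg.2 hx12)) hu0.le,
    sq_nonneg (x - 3/8), sq_nonneg (x - 1/2), mul_pos hu0 hu0]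

set_option maxHeartbeats 1000000 in
/-- Spencer's bound for non-uniform hypergraphs: if `H` has `N` vertices and edges of
sizes `2,…,k` with average degrees `t_i^{i-1} = i|E_i|/N`, and `T = max t_i ≥ 1/2`,
then `α(H) ≥ (1/4)(N/T)`. -/
theorem stmt8 (k N : ℕ) (hk : 2 ≤ k) (hN : 0 < N)
    (E : Finset (Finset (Fin N))) (hE : ∀ e ∈ E, 2 ≤ e.card ∧ e.card ≤ k)
    (t : ℕ → ℝ)
    (ht : ∀ i : ℕ, 2 ≤ i → i ≤ k → 0 ≤ t i ∧
      t i ^ (i - 1) = (i : ℝ) * (E.filter fun e => e.card = i).card / N)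
    (T : ℝ)
    (hTmax : ∀ i : ℕ, 2 ≤ i → i ≤ k → t i ≤ T)
    (hTattain : ∃ i : ℕ, 2 ≤ i ∧ i ≤ k ∧ T = t i)
    (hT : 1 / 2 ≤ T) :
    1 / 4 * ((N : ℝ) / T) ≤ (indepNum E : ℝ) := by
  have hT0 : (0:ℝ) < T := by linarith
  have hN0 : (0:ℝ) < N := by exact_mod_cast hN
  by_cases hA : (N:ℝ) ≤ 4*T
  · -- trivial case: a single vertex is independent
    have h1 : ({⟨0, hN⟩} : Finset (Fin N)).card ≤ indepNum E := by
      apply le_indepNum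
      intro e he hsub
      have h2 := (hE e he).1
      have := Finset.card_le_card hsub
      simp at this
      omega
    simp only [Finset.card_singleton] at h1
    have h2 : (1:ℝ) ≤ indepNum E := by exact_mod_cast h1
    have h3 : (N:ℝ)/T ≤ 4 := by rw [div_le_iff₀ hT0]; linarith
    linarith
  by_cases hB : (N:ℝ) ≤ 8*T
  · -- small case: find a non-edge pair
    have hN3 : 3 ≤ N := by
      have : (2:ℝ) < N := by linarith
      exact_mod_cast this
    have ht2 := ht 2 le_rfl hk
    have hE2 : ((E.filter fun e => e.card = 2).card : ℝ) ≤ N * T / 2 := by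
      have h1 : t 2 = 2 * (E.filter fun e => e.card = 2).card / N := by
        have := ht2.2; rwa [pow_one] at this
      have h2 : t 2 ≤ T := hTmax 2 le_rfl hk
      rw [h1] at h2
      rw [div_le_iff₀ hN0] at h2
      linarith
    have hlt : (E.filter fun e => e.card = 2).card < N.choose 2 := by
      have h3 : ((N.choose 2 : ℕ) : ℝ) = (N:ℝ) * ((N:ℝ) - 1) / 2 := Nat.cast_choose_two (K := ℝ) N
      have h4 : (N:ℝ) * T / 2 < (N:ℝ) * ((N:ℝ) - 1) / 2 := by
        have hTN : T < (N:ℝ) - 1 := by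
          have h5 : (3:ℝ) ≤ N := by exact_mod_cast hN3
          linarith
        nlinarith
      have : ((E.filter fun e => e.card = 2).card : ℝ) < ((N.choose 2 : ℕ) : ℝ) := by
        rw [h3]; linarith
      exact_mod_cast this
    obtain ⟨P₀, hP₀, hP₀E⟩ : ∃ P ∈ powersetCard 2 (univ : Finset (Fin N)), P ∉ E := by
      by_contra h
      push_neg at h
      have hsub : powersetCard 2 (univ : Finset (Fin N)) ⊆ E.filter fun e => e.card = 2 :=
        fun P hP => mem_filter.2 ⟨h P hP, (mem_powersetCard.1 hP).2⟩
      have := Finset.card_le_card hsub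
      rw [card_powersetCard, card_univ, Fintype.card_fin] at this
      omega
    have hP₀card : P₀.card = 2 := (mem_powersetCard.1 hP₀).2
    have h1 : P₀.card ≤ indepNum E := by
      apply le_indepNum
      intro e he hsub
      have h2 := (hE e he).1
      have h3 : e = P₀ := Finset.eq_of_subset_of_card_le hsub (by omega)
      exact hP₀E (h3 ▸ he)
    rw [hP₀card] at h1
    have h2 : (2:ℝ) ≤ indepNum E := by exact_mod_cast h1
    have h3 : (N:ℝ)/T ≤ 8 := by rw [div_le_iff₀ hT0]; linarith
    linarith
  -- main case
  push_neg at hA hB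
  set u : ℝ := (N:ℝ) / (2*T) with hu
  have hu0 : 0 < u := by positivity
  have hu4 : 4 < u := by
    rw [hu, lt_div_iff₀ (by positivity)]
    linarith
  set s : ℕ := ⌊u⌋₊ with hs
  have hsu : (s:ℝ) ≤ u := Nat.floor_le hu0.le
  have hsu1 : u - 1 ≤ s := by
    have := Nat.lt_floor_add_one u
    push_cast at this ⊢
    linarith
  have hsN : s ≤ N := by
    have h1 : u ≤ (N:ℝ) := by
      rw [hu]
      apply div_le_self hN0.le
      linarith
    have : (s:ℝ) ≤ (N:ℝ) := le_trans hsu h1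
    exact_mod_cast this
  set x : ℝ := T * s / N with hx
  have hx0 : 0 ≤ x := by positivity
  have hx12 : x ≤ 1/2 := by
    rw [hx, div_le_iff₀ hN0]
    have h1 : T * s ≤ T * u := by nlinarith
    have h2 : T * u = N / 2 := by rw [hu]; field_simp
    linarith
  have hx2u : x * (2*u) = s := by
    rw [hx, hu]
    field_simp
  -- choose a good subset S₀
  set P := powersetCard s (univ : Finset (Fin N)) with hP
  have hPne : P.Nonempty := powersetCard_nonempty.2 (by simpa using hsN)
  have hPcard : P.card = N.choose s := by
    rw [hP, card_powersetCard, card_univ, Fintype.card_fin]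
  have hdc : ∑ S ∈ P, (E.filter (fun e => e ⊆ S)).card
      = ∑ e ∈ E, (P.filter (fun S => e ⊆ S)).card := by
    simp only [Finset.card_filter]
    exact Finset.sum_comm
  obtain ⟨S₀, hS₀P, hkey⟩ : ∃ S ∈ P, N.choose s * (E.filter (fun e => e ⊆ S)).card ≤
      ∑ e ∈ E, (P.filter (fun S => e ⊆ S)).card := by
    apply exists_le_of_sum_le hPne
    rw [← Finset.mul_sum, hdc, Finset.sum_const, hPcard, smul_eq_mul]
  have hS₀card : S₀.card = s := (mem_powersetCard.1 hS₀P).2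
  have hC0 : (0:ℝ) < N.choose s := by exact_mod_cast Nat.choose_pos hsN
  -- per-edge bound on the number of supersets
  have hperedge : ∀ e ∈ E, ((P.filter (fun S => e ⊆ S)).card : ℝ)
      ≤ (N.choose s : ℝ) * ((s:ℝ)/N)^(e.card) := by
    intro e _
    by_cases hc : e.card ≤ s
    · have h1 : ((P.filter (fun S => e ⊆ S)).card : ℝ)
          ≤ ((N - e.card).choose (s - e.card) : ℝ) := by
        exact_mod_cast count_supersets e
      have h2 := choose_ratio hsN hc
      have h3 : ((N - e.card).choose (s - e.card) : ℝ) * (N:ℝ) ^ e.card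
          ≤ (N.choose s : ℝ) * (s:ℝ) ^ e.card := by exact_mod_cast h2
      have h4 : (0:ℝ) < (N:ℝ) ^ e.card := by positivity
      rw [div_pow, ← mul_div_assoc, le_div_iff₀ h4]
      calc ((P.filter (fun S => e ⊆ S)).card : ℝ) * (N:ℝ) ^ e.card
          ≤ ((N - e.card).choose (s - e.card) : ℝ) * (N:ℝ) ^ e.card := by
            apply mul_le_mul_of_nonneg_right h1 h4.le
        _ ≤ (N.choose s : ℝ) * (s:ℝ) ^ e.card := h3
    · have hempty : P.filter (fun S => e ⊆ S) = ∅ := by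
        apply Finset.filter_eq_empty_iff.2
        intro S hS hsub
        have := Finset.card_le_card hsub
        rw [(mem_powersetCard.1 hS).2] at this
        omega
      rw [hempty]
      simp only [Finset.card_empty, Nat.cast_zero]
      positivity
  -- real bound on the number of edges inside S₀
  set D : ℕ := (E.filter (fun e => e ⊆ S₀)).card with hD
  have hDbound : (D:ℝ) ≤ ∑ e ∈ E, ((s:ℝ)/N)^(e.card) := by
    have h1 : (N.choose s : ℝ) * D ≤ ∑ e ∈ E, ((P.filter (fun S => e ⊆ S)).card : ℝ) := by
      exact_mod_cast hkey
    have h2 : ∑ e ∈ E, ((P.filter (fun S => e ⊆ S)).card : ℝ)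
        ≤ (N.choose s : ℝ) * ∑ e ∈ E, ((s:ℝ)/N)^(e.card) := by
      rw [Finset.mul_sum]
      exact Finset.sum_le_sum hperedge
    have h3 := le_trans h1 h2
    exact le_of_mul_le_mul_left h3 hC0
  -- bound the sum using the degrees
  have hsumbound : ∑ e ∈ E, ((s:ℝ)/N)^(e.card) ≤ (s:ℝ)*x/2 + 2*(s:ℝ)*x^2/3 := by
    have hs0 : (0:ℝ) ≤ (s:ℝ) := by positivity
    have hgroup : ∑ e ∈ E, ((s:ℝ)/N)^(e.card)
        = ∑ i ∈ Icc 2 k, ∑ e ∈ E.filter (fun e => e.card = i), ((s:ℝ)/N)^(e.card) :=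
      (Finset.sum_fiberwise_of_maps_to (fun e he => mem_Icc.2 (hE e he)) _).symm
    rw [hgroup]
    have hstep : ∀ i ∈ Icc 2 k,
        ∑ e ∈ E.filter (fun e => e.card = i), ((s:ℝ)/N)^(e.card) ≤ (s:ℝ)/i * x^(i-1) := by
      intro i hi
      obtain ⟨hi2, hik⟩ := mem_Icc.1 hi
      have hisum : ∑ e ∈ E.filter (fun e => e.card = i), ((s:ℝ)/N)^(e.card)
          = ((E.filter (fun e => e.card = i)).card : ℝ) * ((s:ℝ)/N)^i := by
        rw [Finset.sum_congr rfl (fun e he => by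
          rw [(Finset.mem_filter.1 he).2]), Finset.sum_const, nsmul_eq_mul]
      rw [hisum]
      obtain ⟨ht0, hti⟩ := ht i hi2 hik
      have hcard : ((E.filter (fun e => e.card = i)).card : ℝ) = t i ^ (i-1) * N / i := by
        rw [hti]; field_simp
      rw [hcard]
      have htT : t i ^ (i-1) ≤ T ^ (i-1) := pow_le_pow_left₀ ht0 (hTmax i hi2 hik) _
      obtain ⟨j, rfl⟩ : ∃ j, i = j + 1 := ⟨i - 1, by omega⟩
      have hpow : ((s:ℝ)/N)^(j+1) = ((s:ℝ)/N)^j * ((s:ℝ)/N) := pow_succ _ _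
      have hxj : x ^ (j+1-1) = (T*s/N)^j := by rw [hx]; congr 1
      rw [hxj, hpow]
      have hTj : (T*(s:ℝ)/N)^j = T^j * ((s:ℝ)/N)^j := by rw [mul_div_assoc, mul_pow]
      rw [hTj]
      have h1 : t (j+1) ^ (j+1-1) = t (j+1) ^ j := by congr 1
      have h2 : T ^ (j+1-1) = T ^ j := by congr 1
      rw [h1] at htT ⊢; rw [h2] at htT
      have hsNpow : (0:ℝ) ≤ ((s:ℝ)/N)^j := by positivity
      have key : t (j+1) ^ j * ((s:ℝ)/N)^j ≤ T^j * ((s:ℝ)/N)^j :=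
        mul_le_mul_of_nonneg_right htT hsNpow
      have hNsN : (N:ℝ) * ((s:ℝ)/N) = s := by field_simp
      push_cast
      calc t (j+1) ^ j * (N:ℝ) / ((j:ℝ)+1) * (((s:ℝ)/N)^j * ((s:ℝ)/N))
          = (t (j+1) ^ j * ((s:ℝ)/N)^j) * (((N:ℝ) * ((s:ℝ)/N)) / ((j:ℝ)+1)) := by
            ring
        _ ≤ (T^j * ((s:ℝ)/N)^j) * (((N:ℝ) * ((s:ℝ)/N)) / ((j:ℝ)+1)) := by
            apply mul_le_mul_of_nonneg_right key
            rw [hNsN]; positivity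
        _ = (s:ℝ)/((j:ℝ)+1) * (T^j * ((s:ℝ)/N)^j) := by rw [hNsN]; ring
    calc ∑ i ∈ Icc 2 k, ∑ e ∈ E.filter (fun e => e.card = i), ((s:ℝ)/N)^(e.card)
        ≤ ∑ i ∈ Icc 2 k, (s:ℝ)/i * x^(i-1) := Finset.sum_le_sum hstep
      _ ≤ (s:ℝ)*x/2 + 2*(s:ℝ)*x^2/3 := by
          rw [show Icc 2 k = insert 2 (Icc 3 k) by
              ext i; simp only [Finset.mem_Icc, Finset.mem_insert]; omega,
            Finset.sum_insert (by simp)]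
          have hrest : ∑ i ∈ Icc 3 k, (s:ℝ)/i * x^(i-1) ≤ (s:ℝ)/3 * (2*x^2 - 2*x^k) := by
            have h1 : ∀ i ∈ Icc 3 k, (s:ℝ)/i * x^(i-1) ≤ (s:ℝ)/3 * x^(i-1) := by
              intro i hi
              obtain ⟨hi3, _⟩ := mem_Icc.1 hi
              have hdiv : (s:ℝ)/i ≤ (s:ℝ)/3 := by
                apply div_le_div_of_nonneg_left hs0 (by norm_num)
                exact_mod_cast hi3
              exact mul_le_mul_of_nonneg_right hdiv (pow_nonneg hx0 _)
            calc ∑ i ∈ Icc 3 k, (s:ℝ)/i * x^(i-1) ≤ ∑ i ∈ Icc 3 k, (s:ℝ)/3 * x^(i-1) :=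
                Finset.sum_le_sum h1
              _ = (s:ℝ)/3 * ∑ i ∈ Icc 3 k, x^(i-1) := by rw [Finset.mul_sum]
              _ ≤ (s:ℝ)/3 * (2*x^2 - 2*x^k) := by
                  apply mul_le_mul_of_nonneg_left (geom_bound hx0 hx12 k hk) (by positivity)
          have hxk : (0:ℝ) ≤ x^k := pow_nonneg hx0 k
          have h2t : (s:ℝ)/((2:ℕ):ℝ) * x^(2-1) = (s:ℝ)*x/2 := by norm_num; ring
          rw [h2t]
          nlinarith
  -- build the independent set
  set F := E.filter (fun e => e ⊆ S₀) with hF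
  have hFne : ∀ e ∈ F, e.Nonempty := by
    intro e he
    apply Finset.card_pos.1
    have := (hE e (Finset.mem_filter.1 he).1).1
    omega
  set A := F.attach.image (fun e => e.1.min' (hFne e.1 e.2)) with hA'
  have hindep : ∀ e ∈ E, ¬ e ⊆ S₀ \ A := by
    intro e he hsub
    have heS : e ⊆ S₀ := hsub.trans sdiff_subset
    have heF : e ∈ F := Finset.mem_filter.2 ⟨he, heS⟩
    have hv : e.min' (hFne e heF) ∈ A :=
      Finset.mem_image.2 ⟨⟨e, heF⟩, Finset.mem_attach _ _, rfl⟩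
    have hv2 : e.min' (hFne e heF) ∈ e := Finset.min'_mem _ _
    exact (Finset.mem_sdiff.1 (hsub hv2)).2 hv
  have hAcard : A.card ≤ D := by
    calc A.card ≤ F.attach.card := Finset.card_image_le
      _ = D := by rw [Finset.card_attach]
  have hIcard : (s:ℝ) - D ≤ ((S₀ \ A).card : ℝ) := by
    have h2 : S₀.card ≤ (S₀ \ A).card + A.card := Finset.card_le_card_sdiff_add_card
    have h3 : s ≤ (S₀ \ A).card + D := by omega
    have h4 : (s:ℝ) ≤ ((S₀ \ A).card : ℝ) + D := by exact_mod_cast h3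
    linarith
  have halpha : ((S₀ \ A).card : ℝ) ≤ (indepNum E : ℝ) := by
    exact_mod_cast le_indepNum E _ hindep
  -- final arithmetic
  have hfinal : u/2 ≤ (s:ℝ) - ((s:ℝ)*x/2 + 2*(s:ℝ)*x^2/3) :=
    arith_final u s x hu4.le hsu1 hsu hx2u
  have hgoal : 1/4 * ((N:ℝ)/T) = u/2 := by rw [hu]; ring
  rw [hgoal]
  linarith
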